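/- Let (u,v) be a classical solution of Problem 1 (the heat–wave system) on [0,1] with initial data u₀, v₀, v₁, where v₀ is continuously differentiable on [0,1] and v₁ is continuous on [0,1]. Then for every t ∈ [0,1] one has ∂_x u(t,0) + u(t,0) = v₀′(t) + v₁(t); that is, Problem 1 reduces to a single equation on the interface for the Neumann trace g(t) = ∂_x u(t,0) and the Dirichlet trace u(t,0). -/

import Mathlib

open Set Real MeasureTheory intervalIntegral

/-- A classical solution of the heat equation `∂_t u = ∂_x² u` on `[0,T] × [−1,0]`:
`u` is continuous on the closed rectangle, the partial derivatives `ut = ∂_t u`,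
`ux = ∂_x u`, `uxx = ∂_x² u` exist and are continuous there, and `∂_t u = ∂_x² u`. -/
structure IsHeatSol (T : ℝ) (u ut ux uxx : ℝ → ℝ → ℝ) : Prop where
  contu : ContinuousOn (fun p : ℝ × ℝ => u p.1 p.2) (Icc 0 T ×ˢ Icc (-1) 0)
  hut : ∀ t ∈ Icc (0:ℝ) T, ∀ x ∈ Icc (-1:ℝ) 0, HasDerivAt (fun τ => u τ x) (ut t x) t
  hux : ∀ t ∈ Icc (0:ℝ) T, ∀ x ∈ Icc (-1:ℝ) 0, HasDerivAt (fun y => u t y) (ux t x) x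
  huxx : ∀ t ∈ Icc (0:ℝ) T, ∀ x ∈ Icc (-1:ℝ) 0, HasDerivAt (fun y => ux t y) (uxx t x) x
  contut : ContinuousOn (fun p : ℝ × ℝ => ut p.1 p.2) (Icc 0 T ×ˢ Icc (-1) 0)
  contux : ContinuousOn (fun p : ℝ × ℝ => ux p.1 p.2) (Icc 0 T ×ˢ Icc (-1) 0)
  contuxx : ContinuousOn (fun p : ℝ × ℝ => uxx p.1 p.2) (Icc 0 T ×ˢ Icc (-1) 0)
  heat : ∀ t ∈ Icc (0:ℝ) T, ∀ x ∈ Icc (-1:ℝ) 0, ut t x = uxx t x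

/-- A classical solution of the wave equation `∂_t² v = ∂_x² v` on `[0,T] × [0,1]`:
`v` is twice continuously differentiable up to the boundary, with first partial
derivatives `vt`, `vx`, second partial derivatives `vtt`, `vxx` and mixed partial
derivative `vtx`, all continuous on the closed rectangle. -/
structure IsWaveSol (T : ℝ) (v vt vx vtt vtx vxx : ℝ → ℝ → ℝ) : Prop where
  contv : ContinuousOn (fun p : ℝ × ℝ => v p.1 p.2) (Icc 0 T ×ˢ Icc 0 1)
  hvt : ∀ t ∈ Icc (0:ℝ) T, ∀ x ∈ Icc (0:ℝ) 1, HasDerivAt (fun τ => v τ x) (vt t x) t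
  hvx : ∀ t ∈ Icc (0:ℝ) T, ∀ x ∈ Icc (0:ℝ) 1, HasDerivAt (fun y => v t y) (vx t x) x
  hvtt : ∀ t ∈ Icc (0:ℝ) T, ∀ x ∈ Icc (0:ℝ) 1, HasDerivAt (fun τ => vt τ x) (vtt t x) t
  hvtx : ∀ t ∈ Icc (0:ℝ) T, ∀ x ∈ Icc (0:ℝ) 1, HasDerivAt (fun y => vt t y) (vtx t x) x
  hvxt : ∀ t ∈ Icc (0:ℝ) T, ∀ x ∈ Icc (0:ℝ) 1, HasDerivAt (fun τ => vx τ x) (vtx t x) t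
  hvxx : ∀ t ∈ Icc (0:ℝ) T, ∀ x ∈ Icc (0:ℝ) 1, HasDerivAt (fun y => vx t y) (vxx t x) x
  contvt : ContinuousOn (fun p : ℝ × ℝ => vt p.1 p.2) (Icc 0 T ×ˢ Icc 0 1)
  contvx : ContinuousOn (fun p : ℝ × ℝ => vx p.1 p.2) (Icc 0 T ×ˢ Icc 0 1)
  contvtt : ContinuousOn (fun p : ℝ × ℝ => vtt p.1 p.2) (Icc 0 T ×ˢ Icc 0 1)
  contvtx : ContinuousOn (fun p : ℝ × ℝ => vtx p.1 p.2) (Icc 0 T ×ˢ Icc 0 1)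
  contvxx : ContinuousOn (fun p : ℝ × ℝ => vxx p.1 p.2) (Icc 0 T ×ˢ Icc 0 1)
  wave : ∀ t ∈ Icc (0:ℝ) T, ∀ x ∈ Icc (0:ℝ) 1, vtt t x = vxx t x

/-- Problem 1 (the heat–wave system) on `[0,T]` with initial data `u₀, v₀, v₁`:
the heat equation on `[0,T] × [−1,0]` and the wave equation on `[0,T] × [0,1]`,
coupled at the interface `x = 0` by `u(t,0) = ∂_t v(t,0)` (kinematic condition) and
`∂_x u(t,0) = ∂_x v(t,0)` (dynamic condition), with homogeneous boundary conditions
`u(t,−1) = v(t,1) = 0`. -/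
structure Problem1 (T : ℝ) (u ut ux uxx v vt vx vtt vtx vxx : ℝ → ℝ → ℝ)
    (u₀ v₀ v₁ : ℝ → ℝ) : Prop where
  heatSol : IsHeatSol T u ut ux uxx
  waveSol : IsWaveSol T v vt vx vtt vtx vxx
  kinematic : ∀ t ∈ Icc (0:ℝ) T, u t 0 = vt t 0
  dynamic : ∀ t ∈ Icc (0:ℝ) T, ux t 0 = vx t 0
  bdryu : ∀ t ∈ Icc (0:ℝ) T, u t (-1) = 0
  bdryv : ∀ t ∈ Icc (0:ℝ) T, v t 1 = 0
  initu : ∀ x ∈ Icc (-1:ℝ) 0, u 0 x = u₀ x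
  initv : ∀ x ∈ Icc (0:ℝ) 1, v 0 x = v₀ x
  initvt : ∀ x ∈ Icc (0:ℝ) 1, vt 0 x = v₁ x

open Filter Topology in
/-- Auxiliary: derivative of `s ↦ f s (c - s)` from partial derivatives, when the
`t`-partial derivative `ft` is jointly continuous and the `x`-partial exists at the point. -/
lemma hasDerivAt_comp_antidiag (f ft : ℝ → ℝ → ℝ) (c s₀ B : ℝ)
    (hs₀ : s₀ ∈ Ioo (0:ℝ) 1) (hx₀ : c - s₀ ∈ Ioo (0:ℝ) 1)
    (hft : ∀ s ∈ Icc (0:ℝ) 1, ∀ x ∈ Icc (0:ℝ) 1, HasDerivAt (fun τ => f τ x) (ft s x) s)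
    (hfx : HasDerivAt (fun y => f s₀ y) B (c - s₀))
    (hftc : ContinuousOn (fun p : ℝ × ℝ => ft p.1 p.2) (Icc 0 1 ×ˢ Icc 0 1)) :
    HasDerivAt (fun s => f s (c - s)) (ft s₀ (c - s₀) - B) s₀ := by
  have hlin : HasDerivAt (fun s : ℝ => c - s) (-1) s₀ := by
    simpa using (hasDerivAt_id s₀).const_sub c
  have h₂ : HasDerivAt (fun s => f s₀ (c - s)) (-B) s₀ := by
    have := hfx.comp s₀ hlin
    simpa [Function.comp_def] using this
  -- derivative of the integral part
  have hφ : HasDerivAt (fun s => ∫ σ in s₀..s, ft σ (c - s)) (ft s₀ (c - s₀)) s₀ := by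
    rw [hasDerivAt_iff_isLittleO, Asymptotics.isLittleO_iff]
    intro ε hε
    have hmem : (Icc (0:ℝ) 1 ×ˢ Icc (0:ℝ) 1) ∈ 𝓝 ((s₀, c - s₀) : ℝ × ℝ) :=
      Filter.mem_of_superset ((isOpen_Ioo.prod isOpen_Ioo).mem_nhds ⟨hs₀, hx₀⟩)
        (Set.prod_mono Ioo_subset_Icc_self Ioo_subset_Icc_self)
    have hct : ContinuousAt (fun p : ℝ × ℝ => ft p.1 p.2) (s₀, c - s₀) :=
      hftc.continuousAt hmem
    rw [Metric.continuousAt_iff] at hct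
    obtain ⟨δ, hδ, hball⟩ := hct ε hε
    have hA : 0 < s₀ := hs₀.1
    have hB : 0 < 1 - s₀ := by linarith [hs₀.2]
    have hC : 0 < c - s₀ := hx₀.1
    have hD : 0 < 1 - (c - s₀) := by linarith [hx₀.2]
    have hE : 0 < δ / 2 := by linarith
    have hρpos : 0 < min (min s₀ (1 - s₀)) (min (min (c - s₀) (1 - (c - s₀))) (δ / 2)) :=
      lt_min (lt_min hA hB) (lt_min (lt_min hC hD) hE)
    filter_upwards [Metric.ball_mem_nhds s₀ hρpos] with s hs
    rw [Metric.mem_ball, Real.dist_eq] at hs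
    have habs : |s - s₀| < min (min s₀ (1 - s₀)) (min (min (c - s₀) (1 - (c - s₀))) (δ / 2)) := hs
    have h1 : |s - s₀| < s₀ := lt_of_lt_of_le habs (le_trans (min_le_left _ _) (min_le_left _ _))
    have h2 : |s - s₀| < 1 - s₀ := lt_of_lt_of_le habs (le_trans (min_le_left _ _) (min_le_right _ _))
    have h3 : |s - s₀| < c - s₀ := lt_of_lt_of_le habs (le_trans (min_le_right _ _) (le_trans (min_le_left _ _) (min_le_left _ _)))
    have h4 : |s - s₀| < 1 - (c - s₀) := lt_of_lt_of_le habs (le_trans (min_le_right _ _) (le_trans (min_le_left _ _) (min_le_right _ _)))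
    have h5 : |s - s₀| < δ := lt_of_lt_of_le habs (le_trans (min_le_right _ _) ((min_le_right _ _).trans (by linarith)))
    have habs1 := abs_lt.1 h1
    have habs2 := abs_lt.1 h2
    have habs3 := abs_lt.1 h3
    have habs4 := abs_lt.1 h4
    have hsI : s ∈ Icc (0:ℝ) 1 := ⟨by linarith [habs1.1], by linarith [habs2.2]⟩
    have hs₀I : s₀ ∈ Icc (0:ℝ) 1 := Ioo_subset_Icc_self hs₀
    have hxI : c - s ∈ Icc (0:ℝ) 1 := ⟨by linarith [habs3.2], by linarith [habs4.1]⟩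
    have hsub : uIcc s₀ s ⊆ Icc (0:ℝ) 1 := uIcc_subset_Icc hs₀I hsI
    have hInt : IntervalIntegrable (fun σ => ft σ (c - s)) volume s₀ s := by
      apply ContinuousOn.intervalIntegrable
      have : ContinuousOn (fun σ : ℝ => ((σ, c - s) : ℝ × ℝ)) (uIcc s₀ s) :=
        (continuous_id.prodMk continuous_const).continuousOn
      exact hftc.comp this (fun σ hσ => ⟨hsub hσ, hxI⟩)
    have hkey : (∫ σ in s₀..s, ft σ (c - s)) - (∫ σ in s₀..s₀, ft σ (c - s₀))
        - (s - s₀) • ft s₀ (c - s₀)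
        = ∫ σ in s₀..s, (ft σ (c - s) - ft s₀ (c - s₀)) := by
      rw [intervalIntegral.integral_sub hInt intervalIntegrable_const,
        intervalIntegral.integral_const, intervalIntegral.integral_same]
      ring_nf
    rw [hkey]
    have hbound : ∀ σ ∈ Set.uIoc s₀ s, ‖ft σ (c - s) - ft s₀ (c - s₀)‖ ≤ ε := by
      intro σ hσ
      have hσ' : σ ∈ uIcc s₀ s := Set.Ioc_subset_Icc_self hσ
      have hσd : |σ - s₀| ≤ |s - s₀| := by
        rcases le_total s₀ s with h | h
        · rw [uIcc_of_le h, mem_Icc] at hσ'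
          rw [abs_of_nonneg (by linarith [hσ'.1] : (0:ℝ) ≤ σ - s₀)]
          calc σ - s₀ ≤ s - s₀ := by linarith [hσ'.2]
            _ ≤ |s - s₀| := le_abs_self _
        · rw [uIcc_of_ge h, mem_Icc] at hσ'
          rw [abs_of_nonpos (by linarith [hσ'.2] : σ - s₀ ≤ 0)]
          calc -(σ - s₀) ≤ -(s - s₀) := by linarith [hσ'.1]
            _ ≤ |s - s₀| := neg_le_abs _
      have hd : dist ((σ, c - s) : ℝ × ℝ) ((s₀, c - s₀) : ℝ × ℝ) < δ := by
        rw [Prod.dist_eq]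
        apply max_lt
        · rw [Real.dist_eq]; exact lt_of_le_of_lt hσd h5
        · rw [Real.dist_eq]
          have : |c - s - (c - s₀)| = |s - s₀| := by rw [← abs_neg]; ring_nf
          rw [this]; exact h5
      have := hball hd
      rw [Real.dist_eq] at this
      exact le_of_lt this
    calc ‖∫ σ in s₀..s, (ft σ (c - s) - ft s₀ (c - s₀))‖
        ≤ ε * |s - s₀| := intervalIntegral.norm_integral_le_of_norm_le_const hbound
      _ = ε * ‖s - s₀‖ := by rw [Real.norm_eq_abs]
  -- the function agrees with `f s₀ (c - ·) + integral` near `s₀`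
  have hopen : IsOpen {s : ℝ | s ∈ Ioo (0:ℝ) 1 ∧ c - s ∈ Ioo (0:ℝ) 1} := by
    have : {s : ℝ | s ∈ Ioo (0:ℝ) 1 ∧ c - s ∈ Ioo (0:ℝ) 1}
        = Ioo 0 1 ∩ (fun s : ℝ => c - s) ⁻¹' Ioo 0 1 := rfl
    rw [this]
    exact isOpen_Ioo.inter (isOpen_Ioo.preimage (continuous_const.sub continuous_id))
  have heq : (fun s => f s₀ (c - s) + ∫ σ in s₀..s, ft σ (c - s))
      =ᶠ[𝓝 s₀] (fun s => f s (c - s)) := by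
    filter_upwards [hopen.mem_nhds ⟨hs₀, hx₀⟩] with s hs
    obtain ⟨hs1, hs2⟩ := hs
    have hsub : uIcc s₀ s ⊆ Icc (0:ℝ) 1 :=
      uIcc_subset_Icc (Ioo_subset_Icc_self hs₀) (Ioo_subset_Icc_self hs1)
    have hxI : c - s ∈ Icc (0:ℝ) 1 := Ioo_subset_Icc_self hs2
    have hpc : ContinuousOn (fun σ : ℝ => ((σ, c - s) : ℝ × ℝ)) (uIcc s₀ s) :=
      (continuous_id.prodMk continuous_const).continuousOn
    have hcont : ContinuousOn (fun σ : ℝ => ft σ (c - s)) (uIcc s₀ s) :=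
      hftc.comp hpc (fun σ hσ => ⟨hsub hσ, hxI⟩)
    have hFTC : (∫ σ in s₀..s, ft σ (c - s)) = f s (c - s) - f s₀ (c - s) :=
      intervalIntegral.integral_eq_sub_of_hasDerivAt (f := fun τ => f τ (c - s))
        (fun σ hσ => hft σ (hsub hσ) (c - s) hxI) hcont.intervalIntegrable
    rw [hFTC]; ring
  have := (h₂.add hφ).congr_of_eventuallyEq heq.symm
  exact this.congr_deriv (by ring)

theorem problem1_interface_reduction (u ut ux uxx v vt vx vtt vtx vxx : ℝ → ℝ → ℝ)
    (u₀ v₀ v₀' v₁ : ℝ → ℝ)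
    (hP : Problem1 1 u ut ux uxx v vt vx vtt vtx vxx u₀ v₀ v₁)
    (hv₀d : ∀ x ∈ Icc (0:ℝ) 1, HasDerivAt v₀ (v₀' x) x)
    (hv₀c : ContinuousOn v₀' (Icc 0 1))
    (hv₁c : ContinuousOn v₁ (Icc 0 1)) :
    ∀ t ∈ Icc (0:ℝ) 1, ux t 0 + u t 0 = v₀' t + v₁ t := by
  intro t ht
  obtain ⟨ht0, ht1⟩ := ht
  have htI : t ∈ Icc (0:ℝ) 1 := ⟨ht0, ht1⟩
  have h01 : (0:ℝ) ∈ Icc (0:ℝ) 1 := ⟨le_refl 0, zero_le_one⟩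
  have hW := hP.waveSol
  -- `vx 0 t = v₀' t` by uniqueness of the derivative within `[0,1]`
  have hvx0 : vx 0 t = v₀' t := by
    have hud : UniqueDiffWithinAt ℝ (Icc (0:ℝ) 1) t := (uniqueDiffOn_Icc one_pos) t htI
    have h1 : HasDerivWithinAt v₀ (vx 0 t) (Icc 0 1) t :=
      ((hW.hvx 0 h01 t htI).hasDerivWithinAt).congr
        (fun y hy => (hP.initv y hy).symm) (hP.initv t htI).symm
    have h2 : HasDerivWithinAt v₀ (v₀' t) (Icc 0 1) t := (hv₀d t htI).hasDerivWithinAt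
    rw [← h1.derivWithin hud, ← h2.derivWithin hud]
  -- the backward characteristic function
  set g : ℝ → ℝ := fun s => vt s (t - s) + vx s (t - s) with hg
  have hmaps : MapsTo (fun s : ℝ => ((s, t - s) : ℝ × ℝ)) (Icc 0 t) (Icc 0 1 ×ˢ Icc 0 1) := by
    intro s hs
    obtain ⟨ha, hb⟩ := hs
    simp only [mem_prod, mem_Icc]
    exact ⟨⟨ha, hb.trans ht1⟩, by linarith, by linarith⟩
  have hcm : ContinuousOn (fun s : ℝ => ((s, t - s) : ℝ × ℝ)) (Icc 0 t) :=
    (continuous_id.prodMk (continuous_const.sub continuous_id)).continuousOn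
  have hgc : ContinuousOn g (Icc 0 t) :=
    (hW.contvt.comp hcm hmaps).add (hW.contvx.comp hcm hmaps)
  have hgd : ∀ s ∈ interior (Icc (0:ℝ) t), HasDerivAt g 0 s := by
    rw [interior_Icc]
    intro s hs
    have hs1 : s ∈ Ioo (0:ℝ) 1 := ⟨hs.1, lt_of_lt_of_le hs.2 ht1⟩
    have hx1 : t - s ∈ Ioo (0:ℝ) 1 := ⟨by linarith [hs.2], by linarith [hs.1]⟩
    have hsI : s ∈ Icc (0:ℝ) 1 := Ioo_subset_Icc_self hs1
    have hxI : t - s ∈ Icc (0:ℝ) 1 := Ioo_subset_Icc_self hx1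
    have d1 := hasDerivAt_comp_antidiag vt vtt t s (vtx s (t - s)) hs1 hx1
      hW.hvtt (hW.hvtx s hsI (t - s) hxI) hW.contvtt
    have d2 := hasDerivAt_comp_antidiag vx vtx t s (vxx s (t - s)) hs1 hx1
      hW.hvxt (hW.hvxx s hsI (t - s) hxI) hW.contvtx
    have hsum := d1.add d2
    have hwave := hW.wave s hsI (t - s) hxI
    exact hsum.congr_deriv (by rw [hwave]; ring)
  have hdiff : DifferentiableOn ℝ g (interior (Icc (0:ℝ) t)) :=
    fun s hs => (hgd s hs).differentiableAt.differentiableWithinAt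
  have hmono : MonotoneOn g (Icc 0 t) :=
    monotoneOn_of_deriv_nonneg (convex_Icc 0 t) hgc hdiff
      (fun s hs => by rw [(hgd s hs).deriv])
  have hanti : AntitoneOn g (Icc 0 t) :=
    antitoneOn_of_deriv_nonpos (convex_Icc 0 t) hgc hdiff
      (fun s hs => by rw [(hgd s hs).deriv])
  have h0m : (0:ℝ) ∈ Icc (0:ℝ) t := ⟨le_refl 0, ht0⟩
  have htm : t ∈ Icc (0:ℝ) t := ⟨ht0, le_refl t⟩
  have hconst : g t = g 0 := le_antisymm (hanti h0m htm ht0) (hmono h0m htm ht0)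
  have hgt : g t = vt t 0 + vx t 0 := by simp [hg]
  have hg0 : g 0 = vt 0 t + vx 0 t := by simp [hg]
  rw [hgt, hg0] at hconst
  rw [hP.kinematic t htI] at *
  rw [hP.dynamic t htI, hP.initvt t htI, hvx0] at *
  linarith
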